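/- For any (a₀, a₁) ∈ ℤ² there exists ε > 0 such that for every real λ with 2-ε < λ < 2, the integer sequence defined by a_{n+2} = ⌈-λ a_{n+1} - a_n⌉ (equivalently, the unique integer sequence with 0 ≤ a_{n+2} + λ a_{n+1} + a_n < 1) is periodic. -/
import Mathlib

/-- The integer sequence with `0 ≤ a (n+2) + λ * a (n+1) + a n < 1`. -/
noncomputable def seq (l : ℝ) (a0 a1 : ℤ) : ℕ → ℤ
  | 0 => a0
  | 1 => a1
  | n + 2 => ⌈-l * (seq l a0 a1 (n + 1) : ℝ) - (seq l a0 a1 n : ℝ)⌉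

namespace Stmt11Aux

/-- The limiting (λ → 2⁻) integer sequence. -/
def limSeq (a0 a1 : ℤ) : ℕ → ℤ
  | 0 => a0
  | 1 => a1
  | n + 2 => (if 0 < limSeq a0 a1 (n+1) then 1 else 0)
      - 2 * limSeq a0 a1 (n+1) - limSeq a0 a1 n

section Events

variable (x : ℕ → ℤ)
  (hx : ∀ n, x (n+2) = (if 0 < x (n+1) then 1 else 0) - 2 * x (n+1) - x n)

/-- An "event": a symmetry moment of the sequence. -/
def Ev (n : ℕ) : Prop := x n + x (n+1) = 0 ∧ x (n+1) ≤ 0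

include hx

lemma stepP {n : ℕ} (h : 0 < x (n+1)) : x (n+2) = 1 - 2 * x (n+1) - x n := by
  rw [hx n, if_pos h]

lemma stepN {n : ℕ} (h : x (n+1) ≤ 0) : x (n+2) = - 2 * x (n+1) - x n := by
  rw [hx n, if_neg (by omega)]; ring

lemma stepP3 {n : ℕ} (h : 0 < x (n+2)) : x (n+3) = 1 - 2 * x (n+2) - x (n+1) := by
  have h2 := hx (n+1)
  rw [show n+1+2 = n+3 by omega, show n+1+1 = n+2 by omega] at h2
  rw [h2, if_pos h]

lemma stepN3 {n : ℕ} (h : x (n+2) ≤ 0) : x (n+3) = - 2 * x (n+2) - x (n+1) := by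
  have h2 := hx (n+1)
  rw [show n+1+2 = n+3 by omega, show n+1+1 = n+2 by omega] at h2
  rw [h2, if_neg (by omega)]; ring

omit hx in
lemma ev1 {n : ℕ} (h1 : x (n+1) + x (n+2) = 0) (h2 : x (n+2) ≤ 0) : Ev x (n+1) := by
  constructor
  · rw [show n+1+1 = n+2 by omega]; exact h1
  · rw [show n+1+1 = n+2 by omega]; exact h2

/-- L1 : positive sum, nonpositive first term. -/
lemma L1 : ∀ (k : ℕ) (n : ℕ), x n + x (n+1) = (k : ℤ) + 1 → x n ≤ 0 →
    ∃ m, n ≤ m ∧ Ev x m := by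
  intro k
  induction k with
  | zero =>
    intro n hs hxn
    have h1 : 0 < x (n+1) := by omega
    have e2 := stepP x hx h1
    exact ⟨n+1, by omega, ev1 x (by omega) (by omega)⟩
  | succ k IH =>
    intro n hs hxn
    have h1 : 0 < x (n+1) := by omega
    have e2 := stepP x hx h1
    have h2 : x (n+2) ≤ 0 := by push_cast at hs; omega
    have e3 := stepN3 x hx h2
    have hs' : x (n+2) + x (n+3) = (k : ℤ) + 1 := by push_cast at hs; omega
    obtain ⟨m, hm, hev⟩ := IH (n+2)
      (by rw [show n+2+1 = n+3 by omega]; exact hs') h2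
    exact ⟨m, by omega, hev⟩

lemma L1' {n : ℕ} (hs : 1 ≤ x n + x (n+1)) (hxn : x n ≤ 0) :
    ∃ m, n ≤ m ∧ Ev x m := by
  refine L1 x hx (x n + x (n+1) - 1).toNat n ?_ hxn
  omega

/-- L2 : negative sum, nonnegative first term. -/
lemma L2 {n : ℕ} (hs : x n + x (n+1) ≤ -1) (hxn : 0 ≤ x n) :
    ∃ m, n ≤ m ∧ Ev x m := by
  have h1 : x (n+1) ≤ 0 := by omega
  have e2 := stepN x hx h1
  obtain ⟨m, hm, hev⟩ := L1' x hx (n := n+1)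
    (by rw [show n+1+1 = n+2 by omega]; omega) h1
  exact ⟨m, by omega, hev⟩

/-- L5 : positive sum, positive first term (outward spiral). -/
lemma L5 : ∀ (k : ℕ) (n : ℕ), x n = (k : ℤ) + 1 → 1 ≤ x n + x (n+1) →
    ∃ m, n ≤ m ∧ Ev x m := by
  intro k
  induction k using Nat.strong_induction_on with
  | _ k IH =>
    intro n hxn hs
    rcases lt_or_ge 0 (x (n+1)) with hb | hb
    · -- (a) next term positive, sum becomes ≤ -1
      have e2 := stepP x hx hb
      obtain ⟨m, hm, hev⟩ := L2 x hx (n := n+1)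
        (by rw [show n+1+1 = n+2 by omega]; omega) (by omega)
      exact ⟨m, by omega, hev⟩
    · -- (b) next term nonpositive
      have e2 := stepN x hx hb
      rcases lt_or_ge 0 (x (n+2)) with hc | hc
      · -- (b1) x(n+2) positive : strictly smaller, recurse
        have e3 := stepP3 x hx hc
        obtain ⟨m, hm, hev⟩ := IH (x (n+2) - 1).toNat (by omega) (n+2)
          (by omega) (by rw [show n+2+1 = n+3 by omega]; omega)
        exact ⟨m, by omega, hev⟩
      · -- (b2) x(n+2) nonpositive : L1'
        have e3 := stepN3 x hx hc
        obtain ⟨m, hm, hev⟩ := L1' x hx (n := n+2)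
          (by rw [show n+2+1 = n+3 by omega]; omega) hc
        exact ⟨m, by omega, hev⟩

lemma L5' {n : ℕ} (hxn : 1 ≤ x n) (hs : 1 ≤ x n + x (n+1)) :
    ∃ m, n ≤ m ∧ Ev x m := by
  refine L5 x hx (x n - 1).toNat n ?_ hs
  omega

/-- L6 : negative sum, negative first term. -/
lemma L6 {n : ℕ} (hs : x n + x (n+1) ≤ -1) (hxn : x n ≤ -1) :
    ∃ m, n ≤ m ∧ Ev x m := by
  rcases lt_or_ge 0 (x (n+1)) with hb | hb
  · have e2 := stepP x hx hb
    obtain ⟨m, hm, hev⟩ := L5' x hx (n := n+1) (by omega)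
      (by rw [show n+1+1 = n+2 by omega]; omega)
    exact ⟨m, by omega, hev⟩
  · have e2 := stepN x hx hb
    obtain ⟨m, hm, hev⟩ := L1' x hx (n := n+1)
      (by rw [show n+1+1 = n+2 by omega]; omega) hb
    exact ⟨m, by omega, hev⟩

/-- L4 : zero sum, negative first term. -/
lemma L4 {n : ℕ} (hs : x n + x (n+1) = 0) (hxn : x n ≤ -1) :
    ∃ m, n ≤ m ∧ Ev x m := by
  have h1 : 0 < x (n+1) := by omega
  have e2 := stepP x hx h1
  have h2 : x (n+2) ≤ 0 := by omega
  have e3 := stepN3 x hx h2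
  rcases lt_or_ge (x (n+2)) 0 with hc | hc
  · obtain ⟨m, hm, hev⟩ := L6 x hx (n := n+2)
      (by rw [show n+2+1 = n+3 by omega]; omega) (by omega)
    exact ⟨m, by omega, hev⟩
  · obtain ⟨m, hm, hev⟩ := L2 x hx (n := n+2)
      (by rw [show n+2+1 = n+3 by omega]; omega) hc
    exact ⟨m, by omega, hev⟩

/-- Events occur at arbitrarily late times. -/
lemma exists_event (n : ℕ) : ∃ m, n ≤ m ∧ Ev x m := by
  rcases lt_trichotomy (x n + x (n+1)) 0 with hs | hs | hs
  · rcases le_or_gt 0 (x n) with h | h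
    · exact L2 x hx (by omega) h
    · exact L6 x hx (by omega) (by omega)
  · rcases le_or_gt (x (n+1)) 0 with h | h
    · exact ⟨n, le_refl n, hs, h⟩
    · exact L4 x hx hs (by omega)
  · rcases le_or_gt (x n) 0 with h | h
    · exact L1' x hx (by omega) h
    · exact L5' x hx (by omega) (by omega)

/-- An event at `n` makes `c = n+1` a palindrome center. -/
lemma reflection {n : ℕ} (hev : Ev x n) :
    ∀ k, k ≤ n + 1 → x (n + 1 + k) = x (n + 1 - k) := by
  obtain ⟨hs, hx1⟩ := hev
  have hbase : x (n+2) = x n := by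
    have := stepN x hx hx1
    omega
  intro k
  induction k using Nat.strong_induction_on with
  | _ k IH =>
    match k with
    | 0 => intro _; rfl
    | 1 =>
      intro _
      rw [show n + 1 + 1 = n + 2 by omega, show n + 1 - 1 = n by omega]
      exact hbase
    | (k+2) =>
      intro hk
      obtain ⟨j, hj⟩ : ∃ j, n + 1 = j + (k + 2) := ⟨n + 1 - (k+2), by omega⟩
      have IH1 : x (n + 1 + (k+1)) = x (j + 1) := by
        have := IH (k+1) (by omega) (by omega)
        rw [this]; congr 1; omega
      have IH0 : x (n + 1 + k) = x (j + 2) := by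
        have := IH k (by omega) (by omega)
        rw [this]; congr 1; omega
      have hxj := hx j
      have hxc := hx (n + 1 + k)
      rw [show n + 1 + k + 1 = n + 1 + (k+1) by omega, IH1, IH0] at hxc
      rw [show n + 1 + k + 2 = n + 1 + (k+2) by omega] at hxc
      rw [show n + 1 - (k+2) = j by omega, hxc, hxj]
      ring

/-- Reflection in symmetric form: indices summing to `2(n+1)` have equal values. -/
lemma reflection' {n : ℕ} (hev : Ev x n) {i j : ℕ} (hij : i + j = 2 * (n+1)) :
    x i = x j := by
  rcases le_total i j with h | h
  · have := reflection x hx hev ((n+1) - i) (by omega)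
    have h1 : n + 1 + (n + 1 - i) = j := by omega
    have h2 : n + 1 - (n + 1 - i) = i := by omega
    rw [h1, h2] at this; exact this.symm
  · have := reflection x hx hev ((n+1) - j) (by omega)
    have h1 : n + 1 + (n + 1 - j) = i := by omega
    have h2 : n + 1 - (n + 1 - j) = j := by omega
    rw [h1, h2] at this; exact this

/-- The sequence returns to its initial pair. -/
lemma returns : ∃ p, 1 ≤ p ∧ x p = x 0 ∧ x (p+1) = x 1 := by
  obtain ⟨n1, -, ev1⟩ := exists_event x hx 0
  obtain ⟨n2, hn2, ev2⟩ := exists_event x hx (n1 + 1)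
  refine ⟨2 * ((n2+1) - (n1+1)), by omega, ?_, ?_⟩
  · have h1 : x 0 = x (2 * (n1+1)) := reflection' x hx ev1 (by omega)
    have h2 : x (2 * (n1+1)) = x (2 * ((n2+1) - (n1+1))) :=
      reflection' x hx ev2 (by omega)
    rw [h1, h2]
  · have h1 : x 1 = x (2 * (n1+1) - 1) := reflection' x hx ev1 (by omega)
    have h2 : x (2 * (n1+1) - 1) = x (2 * ((n2+1) - (n1+1)) + 1) :=
      reflection' x hx ev2 (by omega)
    rw [h1, h2]

end Events

lemma limSeq_rec (a0 a1 : ℤ) (n : ℕ) :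
    limSeq a0 a1 (n+2) = (if 0 < limSeq a0 a1 (n+1) then 1 else 0)
      - 2 * limSeq a0 a1 (n+1) - limSeq a0 a1 n := by
  rfl

/-- Running maximum of |x|. -/
def maxAbs (x : ℕ → ℤ) : ℕ → ℤ
  | 0 => |x 0|
  | n + 1 => max (maxAbs x n) |x (n+1)|

lemma le_maxAbs (x : ℕ → ℤ) : ∀ n m, m ≤ n → |x m| ≤ maxAbs x n := by
  intro n
  induction n with
  | zero => intro m hm; interval_cases m; exact le_refl _
  | succ n IH =>
    intro m hm
    rcases Nat.lt_or_ge m (n+1) with h | h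
    · exact le_trans (IH m (by omega)) (le_max_left _ _)
    · have : m = n + 1 := by omega
      subst this; exact le_max_right _ _

lemma maxAbs_nonneg (x : ℕ → ℤ) (n : ℕ) : 0 ≤ maxAbs x n :=
  le_trans (abs_nonneg _) (le_maxAbs x n 0 (by omega))

/-- The key ceiling computation. -/
lemma ceil_eq (l : ℝ) (hl2 : l < 2) (a b B : ℤ) (hB : |b| ≤ B)
    (hl : 2 - l < 1 / ((B : ℝ) + 1)) :
    ⌈-l * (b : ℝ) - (a : ℝ)⌉ = (if 0 < b then 1 else 0) - 2 * b - a := by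
  have hB0 : (0:ℤ) ≤ B := le_trans (abs_nonneg _) hB
  have hBR : (0:ℝ) < (B:ℝ) + 1 := by positivity
  have hkey : -l * (b : ℝ) - (a : ℝ) = ((-2*b - a : ℤ) : ℝ) + (2 - l) * (b : ℝ) := by
    push_cast; ring
  have hd : 0 < 2 - l := by linarith
  have hB1 : (2 - l) * ((B:ℝ) + 1) < 1 := (lt_div_iff₀ hBR).1 hl
  rcases lt_trichotomy b 0 with hb | hb | hb
  · -- b < 0 : perturbation in (-1, 0], ceiling is -2b-a
    rw [if_neg (by omega)]
    have hbB : -(B:ℝ) ≤ (b:ℝ) := by exact_mod_cast neg_le_of_abs_le hB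
    have hbneg : (b:ℝ) ≤ 0 := by exact_mod_cast hb.le
    have h1 : (2 - l) * (b:ℝ) ≤ 0 := mul_nonpos_of_nonneg_of_nonpos (by linarith) hbneg
    have h2 : -1 < (2 - l) * (b:ℝ) := by nlinarith
    rw [hkey, Int.ceil_eq_iff]
    constructor
    · push_cast; linarith
    · push_cast; linarith
  · subst hb
    rw [if_neg (by omega)]
    rw [show -l * ((0:ℤ):ℝ) - (a:ℝ) = ((0 - 2*0 - a : ℤ) : ℝ) by push_cast; ring]
    rw [Int.ceil_intCast]
  · -- b > 0 : perturbation in (0, 1), ceiling is -2b-a+1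
    rw [if_pos hb]
    have hbB : (b:ℝ) ≤ (B:ℝ) := by exact_mod_cast le_of_abs_le hB
    have hbpos : (0:ℝ) < (b:ℝ) := by exact_mod_cast hb
    have h1 : 0 < (2 - l) * (b:ℝ) := mul_pos hd hbpos
    have h2 : (2 - l) * (b:ℝ) < 1 := by nlinarith
    rw [hkey, Int.ceil_eq_iff]
    constructor
    · push_cast; linarith
    · push_cast; linarith

end Stmt11Aux

open Stmt11Aux in
theorem stmt11 (a0 a1 : ℤ) :
    ∃ ε > (0 : ℝ), ∀ l : ℝ, 2 - ε < l → l < 2 →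
      ∃ n : ℕ, 1 ≤ n ∧ seq l a0 a1 n = a0 ∧ seq l a0 a1 (n + 1) = a1 := by
  set x := limSeq a0 a1 with hxdef
  have hx : ∀ n, x (n+2) = (if 0 < x (n+1) then 1 else 0) - 2 * x (n+1) - x n :=
    limSeq_rec a0 a1
  obtain ⟨p, hp1, hp0, hpp1⟩ := returns x hx
  set B := maxAbs x (p+1) with hBdef
  have hB0 : (0:ℤ) ≤ B := maxAbs_nonneg x (p+1)
  refine ⟨1 / ((B:ℝ) + 1), by positivity, ?_⟩
  intro l hl1 hl2
  have hle : 2 - l < 1 / ((B:ℝ)+1) := by linarith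
  -- agreement of seq with limSeq up to p+1
  have agree : ∀ n, n ≤ p + 1 → seq l a0 a1 n = x n := by
    intro n
    induction n using Nat.strong_induction_on with
    | _ n IH =>
      match n with
      | 0 => intro _; rfl
      | 1 => intro _; rfl
      | (n+2) =>
        intro hn
        have h0 := IH n (by omega) (by omega)
        have h1 := IH (n+1) (by omega) (by omega)
        have : seq l a0 a1 (n+2) = ⌈-l * (x (n+1) : ℝ) - (x n : ℝ)⌉ := by
          rw [show seq l a0 a1 (n+2)
            = ⌈-l * (seq l a0 a1 (n+1) : ℝ) - (seq l a0 a1 n : ℝ)⌉ from rfl, h0, h1]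
        rw [this, ceil_eq l hl2 (x n) (x (n+1)) B
          (le_maxAbs x (p+1) (n+1) (by omega)) hle, hx n]
  have h00 : x 0 = a0 := rfl
  have h11 : x 1 = a1 := rfl
  exact ⟨p, hp1, by rw [agree p (by omega), hp0, h00],
    by rw [agree (p+1) le_rfl, hpp1, h11]⟩
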